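/- If n ≥ 2 is an integer with Ω(n) = k (so k ≥ 1), then 2 ≤ |g⁻¹(n)| ≤ ∑_{j=0}^{k} binom(k, j) · j!. -/

import Mathlib

open ArithmeticFunction Finset
open scoped ArithmeticFunction.Omega ArithmeticFunction.omega ArithmeticFunction.Moebius ArithmeticFunction.zeta

private def Mfun : ℕ → ℕ
  | n =>
    if h : n ≤ 1 then 1
    else ∑ p ∈ n.primeFactors.attach, Mfun (n / p.1)
decreasing_by
  exact Nat.div_lt_self (by omega) (Nat.Prime.one_lt (Nat.prime_of_mem_primeFactors p.2))

private lemma Mfun_le_one {n : ℕ} (h : n ≤ 1) : Mfun n = 1 := by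
  rw [Mfun]; simp [h]

private lemma Mfun_eq {n : ℕ} (h : 2 ≤ n) :
    Mfun n = ∑ p ∈ n.primeFactors, Mfun (n / p) := by
  rw [Mfun]
  rw [dif_neg (by omega)]
  exact Finset.sum_attach _ fun p => Mfun (n / p)

private lemma Mfun_pos : ∀ n, 0 < Mfun n := by
  intro n
  induction n using Nat.strong_induction_on with
  | _ n ih =>
    rcases le_or_gt n 1 with h | h
    · simp [Mfun_le_one h]
    · rw [Mfun_eq h]
      have hne : n.primeFactors.Nonempty := Nat.nonempty_primeFactors.2 h
      obtain ⟨p, hp⟩ := hne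
      have hp' := Nat.prime_of_mem_primeFactors hp
      refine Finset.sum_pos' (fun i _ => Nat.zero_le _) ⟨p, hp, ?_⟩
      exact ih _ (Nat.div_lt_self (by omega) hp'.one_lt)

private lemma card_primeFactors_eq (n : ℕ) : n.primeFactors.card = ω n := by
  rw [ArithmeticFunction.cardDistinctFactors_apply, Nat.primeFactors, List.card_toFinset]

private lemma omega_le_Omega (n : ℕ) : ω n ≤ Ω n := by
  rw [ArithmeticFunction.cardDistinctFactors_apply, ArithmeticFunction.cardFactors_apply]
  exact List.Sublist.length_le (List.dedup_sublist _)

private lemma Omega_div {n p : ℕ} (hn : n ≠ 0) (hp : p ∈ n.primeFactors) :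
    Ω (n / p) + 1 = Ω n := by
  have hd := Nat.dvd_of_mem_primeFactors hp
  have hpp := Nat.prime_of_mem_primeFactors hp
  have hq : n / p ≠ 0 := Nat.div_ne_zero_iff.2 ⟨hpp.ne_zero, Nat.le_of_dvd (Nat.pos_of_ne_zero hn) hd⟩
  conv_rhs => rw [← Nat.mul_div_cancel' hd]
  rw [ArithmeticFunction.cardFactors_mul hpp.ne_zero hq,
    ArithmeticFunction.cardFactors_apply_prime hpp]
  ring

private lemma Mfun_le : ∀ n, Mfun n ≤ (Ω n).factorial := by
  intro n
  induction n using Nat.strong_induction_on with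
  | _ n ih =>
    rcases le_or_gt n 1 with h | h
    · rw [Mfun_le_one h]; exact Nat.one_le_iff_ne_zero.2 (Nat.factorial_ne_zero _)
    · rw [Mfun_eq h]
      have hn0 : n ≠ 0 := by omega
      obtain ⟨p0, hp0⟩ := Nat.nonempty_primeFactors.2 h
      have hΩ : 1 ≤ Ω n := by
        have := Omega_div hn0 hp0; omega
      calc ∑ p ∈ n.primeFactors, Mfun (n / p)
          ≤ ∑ p ∈ n.primeFactors, (Ω n - 1).factorial := by
            refine Finset.sum_le_sum fun p hp => ?_
            have hpp := Nat.prime_of_mem_primeFactors hp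
            have hlt := Nat.div_lt_self (by omega : 0 < n) hpp.one_lt
            have := Omega_div hn0 hp
            have h2 : Ω (n / p) = Ω n - 1 := by omega
            simpa [h2] using ih _ hlt
        _ = n.primeFactors.card * (Ω n - 1).factorial := by
            rw [Finset.sum_const, smul_eq_mul]
        _ ≤ Ω n * (Ω n - 1).factorial := by
            have := omega_le_Omega n
            have := card_primeFactors_eq n
            exact Nat.mul_le_mul_right _ (by omega)
        _ = (Ω n).factorial := by
            obtain ⟨m, hm⟩ : ∃ m, Ω n = m + 1 := ⟨Ω n - 1, by omega⟩
            rw [hm]; simp [Nat.factorial_succ]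

private def Pf : ArithmeticFunction ℝ :=
  ⟨fun n => if n.Prime then 1 else 0, by simp [Nat.not_prime_zero]⟩

private def Ef : ArithmeticFunction ℝ :=
  ⟨fun n => if n = 0 then 0 else (-1) ^ (Ω n) * Mfun n, by simp⟩

private lemma Ef_apply {n : ℕ} (hn : n ≠ 0) : Ef n = (-1) ^ (Ω n) * Mfun n := if_neg hn

private lemma divisors_filter_prime {n : ℕ} (hn : n ≠ 0) :
    n.divisors.filter Nat.Prime = n.primeFactors := by
  ext p
  simp [Nat.mem_primeFactors, Nat.mem_divisors, hn, and_comm]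

private lemma onePlusP_mul_E : (1 + Pf) * Ef = 1 := by
  ext n
  rcases Nat.eq_zero_or_pos n with rfl | hn
  · simp
  have hn0 : n ≠ 0 := hn.ne'
  rw [ArithmeticFunction.mul_apply, Nat.sum_divisorsAntidiagonal (fun a b => (1 + Pf) a * Ef b)]
  have hsplit : ∀ d : ℕ, (1 + Pf) d * Ef (n / d)
      = (1 : ArithmeticFunction ℝ) d * Ef (n / d) + Pf d * Ef (n / d) := by
    intro d
    rw [ArithmeticFunction.add_apply, add_mul]
  rw [Finset.sum_congr rfl fun d _ => hsplit d, Finset.sum_add_distrib]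
  have h1 : ∑ d ∈ n.divisors, (1 : ArithmeticFunction ℝ) d * Ef (n / d) = Ef n := by
    rw [Finset.sum_eq_single 1]
    · simp
    · intro d hd hd1
      simp [ArithmeticFunction.one_apply, hd1]
    · intro h
      exact absurd (Nat.one_mem_divisors.2 hn0) h
  have h2 : ∑ d ∈ n.divisors, Pf d * Ef (n / d) = ∑ p ∈ n.primeFactors, Ef (n / p) := by
    rw [← divisors_filter_prime hn0, Finset.sum_filter]
    refine Finset.sum_congr rfl fun d _ => ?_
    by_cases hd : d.Prime <;> simp [Pf, hd]
  rw [h1, h2]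
  rcases eq_or_lt_of_le (show 1 ≤ n from hn) with h1' | h2'
  · have : n = 1 := h1'.symm
    subst this
    simp [Ef_apply, Mfun_le_one]
  · -- n ≥ 2
    have hΩsign : ∀ p ∈ n.primeFactors, Ef (n / p) = -((-1) ^ (Ω n) * Mfun (n / p)) := by
      intro p hp
      have hpp := Nat.prime_of_mem_primeFactors hp
      have hq : n / p ≠ 0 :=
        Nat.div_ne_zero_iff.2 ⟨hpp.ne_zero, Nat.le_of_dvd hn (Nat.dvd_of_mem_primeFactors hp)⟩
      rw [Ef_apply hq]
      have := Omega_div hn0 hp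
      rw [← this, pow_succ]
      ring
    rw [Finset.sum_congr rfl hΩsign, Ef_apply hn0, Finset.sum_neg_distrib,
      ← Finset.mul_sum, ← Nat.cast_sum, ← Mfun_eq h2',
      ArithmeticFunction.one_apply, if_neg (by omega : n ≠ 1)]
    ring

private lemma Omega_prod {s : Finset ℕ} (hs : ∀ p ∈ s, p.Prime) :
    Ω (∏ p ∈ s, p) = s.card := by
  induction s using Finset.induction_on with
  | empty => simp
  | @insert a s ha ih =>
    have hap : a.Prime := hs a (Finset.mem_insert_self a s)
    have hs' : ∀ p ∈ s, p.Prime := fun p hp => hs p (Finset.mem_insert_of_mem hp)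
    have hprodne : (∏ p ∈ s, p) ≠ 0 :=
      Finset.prod_ne_zero_iff.2 fun p hp => (hs' p hp).ne_zero
    rw [Finset.prod_insert ha, ArithmeticFunction.cardFactors_mul hap.ne_zero hprodne,
      ArithmeticFunction.cardFactors_apply_prime hap, ih hs', Finset.card_insert_of_notMem ha]
    omega

private lemma sum_le_bound {n k : ℕ} (hn : 2 ≤ n) (hk : Ω n = k) :
    ∑ d ∈ n.divisors.filter Squarefree, Mfun (n / d)
      ≤ ∑ j ∈ Finset.range (k + 1), k.choose j * j.factorial := by
  have hn0 : n ≠ 0 := by omega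
  rw [Nat.sum_divisors_filter_squarefree hn0]
  have hPF : (UniqueFactorizationMonoid.normalizedFactors n).toFinset = n.primeFactors := by
    rw [Nat.factors_eq]
    rfl
  rw [hPF]
  have hcard : n.primeFactors.card ≤ k := by
    have h1 := card_primeFactors_eq n
    have h2 := omega_le_Omega n
    omega
  have step1 : ∀ s ∈ n.primeFactors.powerset, Mfun (n / s.val.prod) ≤ (k - s.card).factorial := by
    intro s hs
    rw [Finset.mem_powerset] at hs
    have hprime : ∀ p ∈ s, p.Prime := fun p hp => Nat.prime_of_mem_primeFactors (hs hp)
    have hprodeq : s.val.prod = ∏ p ∈ s, p := by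
      rw [Finset.prod_eq_multiset_prod, Multiset.map_id']
    have hdvd : (∏ p ∈ s, p) ∣ n :=
      (Finset.prod_dvd_prod_of_subset s n.primeFactors _ hs).trans (Nat.prod_primeFactors_dvd n)
    have hprodne : (∏ p ∈ s, p) ≠ 0 := Finset.prod_ne_zero_iff.2 fun p hp => (hprime p hp).ne_zero
    have hqne : n / (∏ p ∈ s, p) ≠ 0 :=
      Nat.div_ne_zero_iff.2 ⟨hprodne, Nat.le_of_dvd (by omega) hdvd⟩
    have hsum : Ω (∏ p ∈ s, p) + Ω (n / ∏ p ∈ s, p) = k := by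
      rw [← hk]
      conv_rhs => rw [← Nat.mul_div_cancel' hdvd]
      rw [ArithmeticFunction.cardFactors_mul hprodne hqne]
    rw [Omega_prod hprime] at hsum
    have : Ω (n / ∏ p ∈ s, p) = k - s.card := by omega
    calc Mfun (n / s.val.prod) ≤ (Ω (n / s.val.prod)).factorial := Mfun_le _
      _ = (k - s.card).factorial := by rw [hprodeq, this]
  calc ∑ s ∈ n.primeFactors.powerset, Mfun (n / s.val.prod)
      ≤ ∑ s ∈ n.primeFactors.powerset, (k - s.card).factorial := Finset.sum_le_sum step1
    _ = ∑ j ∈ Finset.range (n.primeFactors.card + 1),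
          ∑ s ∈ Finset.powersetCard j n.primeFactors, (k - s.card).factorial :=
        Finset.sum_powerset _ _
    _ = ∑ j ∈ Finset.range (n.primeFactors.card + 1),
          n.primeFactors.card.choose j * (k - j).factorial := by
        refine Finset.sum_congr rfl fun j _ => ?_
        rw [Finset.sum_congr rfl fun s hs => by
            rw [(Finset.mem_powersetCard.1 hs).2], Finset.sum_const, smul_eq_mul,
          Finset.card_powersetCard]
    _ ≤ ∑ j ∈ Finset.range (k + 1), k.choose j * (k - j).factorial := by
        refine le_trans (Finset.sum_le_sum fun j _ =>
          Nat.mul_le_mul_right _ (Nat.choose_le_choose j hcard)) ?_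
        exact Finset.sum_le_sum_of_subset (Finset.range_subset_range.2 (by omega))
    _ = ∑ j ∈ Finset.range (k + 1), k.choose j * j.factorial := by
        rw [← Finset.sum_range_reflect]
        refine Finset.sum_congr rfl fun j hj => ?_
        rw [Finset.mem_range] at hj
        have hj' : j ≤ k := by omega
        rw [show k + 1 - 1 - j = k - j by omega, Nat.choose_symm hj',
          show k - (k - j) = j by omega]

private lemma two_le_sum {n : ℕ} (hn : 2 ≤ n) :
    2 ≤ ∑ d ∈ n.divisors.filter Squarefree, Mfun (n / d) := by
  have hn0 : n ≠ 0 := by omega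
  have hp := Nat.minFac_prime (by omega : n ≠ 1)
  have hsub : ({1, n.minFac} : Finset ℕ) ⊆ n.divisors.filter Squarefree := by
    intro d hd
    rcases Finset.mem_insert.1 hd with rfl | hd
    · exact Finset.mem_filter.2 ⟨Nat.one_mem_divisors.2 hn0, squarefree_one⟩
    · rw [Finset.mem_singleton] at hd
      subst hd
      exact Finset.mem_filter.2 ⟨Nat.mem_divisors.2 ⟨Nat.minFac_dvd n, hn0⟩, hp.squarefree⟩
  have hne : (1 : ℕ) ≠ n.minFac := by have := hp.two_le; omega
  refine le_trans ?_ (Finset.sum_le_sum_of_subset hsub)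
  rw [Finset.sum_pair hne]
  have h1 := Mfun_pos (n / 1)
  have h2 := Mfun_pos (n / n.minFac)
  omega

/-- Let `g` be the arithmetic function with `g(n) = ω(n) + 1` for `n ≥ 1`
and let `ginv` be its Dirichlet inverse (characterized by `g * ginv = 1`).  If `n ≥ 2` and
`Ω(n) = k`, then `2 ≤ |ginv(n)| ≤ ∑_{j=0}^{k} C(k, j) · j!`. -/
theorem stmt_7 (g ginv : ArithmeticFunction ℝ)
    (hg : ∀ n : ℕ, 0 < n → g n = (ArithmeticFunction.cardDistinctFactors n : ℝ) + 1)
    (hginv : g * ginv = 1) (n k : ℕ) (hn : 2 ≤ n)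
    (hk : ArithmeticFunction.cardFactors n = k) :
    2 ≤ |ginv n| ∧
      |ginv n| ≤ ∑ j ∈ Finset.range (k + 1), ((k.choose j * j.factorial : ℕ) : ℝ) := by
  have hn0 : n ≠ 0 := by omega
  have g_eq : g = (1 + Pf) * ((ζ : ArithmeticFunction ℕ) : ArithmeticFunction ℝ) := by
    ext m
    rcases Nat.eq_zero_or_pos m with rfl | hm
    · simp
    have hm0 : m ≠ 0 := hm.ne'
    rw [hg m hm, ArithmeticFunction.mul_apply, Nat.sum_divisorsAntidiagonal
      (fun a b => (1 + Pf) a * ((ζ : ArithmeticFunction ℕ) : ArithmeticFunction ℝ) b)]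
    have hterm : ∀ d ∈ m.divisors,
        (1 + Pf) d * ((ζ : ArithmeticFunction ℕ) : ArithmeticFunction ℝ) (m / d)
          = (1 : ArithmeticFunction ℝ) d + Pf d := by
      intro d hd
      obtain ⟨hdvd, -⟩ := Nat.mem_divisors.1 hd
      have hdd : m / d ≠ 0 := by
        have hd0 : d ≠ 0 := by rintro rfl; simp at hdvd; omega
        exact Nat.div_ne_zero_iff.2 ⟨hd0, Nat.le_of_dvd hm hdvd⟩
      rw [ArithmeticFunction.natCoe_apply, ArithmeticFunction.zeta_apply_ne hdd, Nat.cast_one,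
        mul_one, ArithmeticFunction.add_apply]
    rw [Finset.sum_congr rfl hterm, Finset.sum_add_distrib]
    have h1 : ∑ d ∈ m.divisors, (1 : ArithmeticFunction ℝ) d = 1 := by
      rw [Finset.sum_eq_single 1]
      · simp
      · intro d hd hd1; simp [ArithmeticFunction.one_apply, hd1]
      · intro h; exact absurd (Nat.one_mem_divisors.2 hm0) h
    have h2 : ∑ d ∈ m.divisors, Pf d = ((ω m : ℕ) : ℝ) := by
      simp only [Pf, ArithmeticFunction.coe_mk]
      rw [Finset.sum_boole, divisors_filter_prime hm0, card_primeFactors_eq]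
    rw [h1, h2]
    ring
  have hginv_eq : ginv = ((μ : ArithmeticFunction ℤ) : ArithmeticFunction ℝ) * Ef := by
    have hone : (((μ : ArithmeticFunction ℤ) : ArithmeticFunction ℝ) * Ef) * g = 1 := by
      rw [g_eq]
      have hring : (((μ : ArithmeticFunction ℤ) : ArithmeticFunction ℝ) * Ef) *
          ((1 + Pf) * ((ζ : ArithmeticFunction ℕ) : ArithmeticFunction ℝ))
          = (((ζ : ArithmeticFunction ℕ) : ArithmeticFunction ℝ) *
              ((μ : ArithmeticFunction ℤ) : ArithmeticFunction ℝ)) * ((1 + Pf) * Ef) := by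
        ring
      rw [hring, ArithmeticFunction.coe_zeta_mul_coe_moebius, onePlusP_mul_E, one_mul]
    exact (left_inv_eq_right_inv hone hginv).symm
  have key : ginv n
      = (-1 : ℝ) ^ k * ((∑ d ∈ n.divisors.filter Squarefree, Mfun (n / d) : ℕ) : ℝ) := by
    rw [hginv_eq, ArithmeticFunction.mul_apply, Nat.sum_divisorsAntidiagonal
      (fun a b => ((μ : ArithmeticFunction ℤ) : ArithmeticFunction ℝ) a * Ef b)]
    have hzero : ∀ d ∈ n.divisors,
        ((μ : ArithmeticFunction ℤ) : ArithmeticFunction ℝ) d * Ef (n / d) ≠ 0 → Squarefree d := by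
      intro d _ hne
      by_contra hsq
      rw [ArithmeticFunction.intCoe_apply,
        ArithmeticFunction.moebius_eq_zero_of_not_squarefree hsq] at hne
      simp at hne
    rw [← Finset.sum_filter_of_ne hzero]
    have hterm : ∀ d ∈ n.divisors.filter Squarefree,
        ((μ : ArithmeticFunction ℤ) : ArithmeticFunction ℝ) d * Ef (n / d)
          = (-1 : ℝ) ^ k * (Mfun (n / d) : ℝ) := by
      intro d hd
      obtain ⟨hd', hsq⟩ := Finset.mem_filter.1 hd
      obtain ⟨hdvd, -⟩ := Nat.mem_divisors.1 hd'
      have hd0 : d ≠ 0 := by rintro rfl; rw [zero_dvd_iff] at hdvd; omega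
      have hdd : n / d ≠ 0 := Nat.div_ne_zero_iff.2 ⟨hd0, Nat.le_of_dvd (by omega) hdvd⟩
      have hOm : Ω d + Ω (n / d) = k := by
        rw [← hk]
        conv_rhs => rw [← Nat.mul_div_cancel' hdvd]
        rw [ArithmeticFunction.cardFactors_mul hd0 hdd]
      rw [ArithmeticFunction.intCoe_apply, ArithmeticFunction.moebius_apply_of_squarefree hsq,
        Ef_apply hdd, ← hOm]
      push_cast
      rw [pow_add]
      ring
    rw [Finset.sum_congr rfl hterm, ← Finset.mul_sum, Nat.cast_sum]
  have habs : |ginv n|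
      = ((∑ d ∈ n.divisors.filter Squarefree, Mfun (n / d) : ℕ) : ℝ) := by
    rw [key, abs_mul, abs_pow, abs_neg, abs_one, one_pow, one_mul, Nat.abs_cast]
  constructor
  · rw [habs]
    exact_mod_cast two_le_sum hn
  · rw [habs]
    have hb := sum_le_bound hn hk
    calc ((∑ d ∈ n.divisors.filter Squarefree, Mfun (n / d) : ℕ) : ℝ)
        ≤ ((∑ j ∈ Finset.range (k + 1), k.choose j * j.factorial : ℕ) : ℝ) := by
          exact_mod_cast hb
      _ = ∑ j ∈ Finset.range (k + 1), ((k.choose j * j.factorial : ℕ) : ℝ) := Nat.cast_sum _ _
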